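/- Let F be a field of characteristic ≠ 2, V an infinite-dimensional vector space over F with a nondegenerate quadratic form Q, and φ : V → V an orthogonal linear transformation with Bogolyubov automorphism [φ] of Cl(V,Q). Suppose V' ⊆ V is a finite-dimensional nondegenerate even-dimensional subspace and x is an invertible element of Cl(V,Q) lying in the subalgebra generated by ι(V'), such that [φ](a) = x a x⁻¹ for all a ∈ Cl(V,Q). Then every v ∈ V'^⊥ satisfies φ(v) = v or φ(v) = −v; moreover, V'^⊥ ⊆ V(1) or V'^⊥ ⊆ V(−1). -/

import Mathlib

/-- The eigenspace `V(α) = ker (φ - α·Id)` of a linear operator `φ`. -/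
noncomputable def eigSp {F V : Type*} [Field F] [AddCommGroup V] [Module F V]
    (φ : V →ₗ[F] V) (α : F) : Submodule F V :=
  LinearMap.ker (φ - α • LinearMap.id)

/-- The eigenspace `V(α)` is `φ`-invariant, so `φ` induces a linear map on the
quotient `V / V(α)`. -/
noncomputable def quotMap {F V : Type*} [Field F] [AddCommGroup V] [Module F V]
    (φ : V →ₗ[F] V) (α : F) : (V ⧸ eigSp φ α) →ₗ[F] (V ⧸ eigSp φ α) :=
  Submodule.mapQ _ _ φ (by
    intro v hv
    simp only [eigSp, LinearMap.mem_ker, LinearMap.sub_apply, LinearMap.smul_apply,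
      LinearMap.id_coe, id_eq, sub_eq_zero, Submodule.mem_comap] at hv ⊢
    rw [hv, map_smul, hv])


lemma my_iota_inj {F V : Type*} [Field F] [AddCommGroup V] [Module F V] (h2 : (2:F) ≠ 0)
    (Q : QuadraticForm F V) : Function.Injective (CliffordAlgebra.ι Q) := by
  haveI : Invertible (2:F) := invertibleOfNonzero h2
  intro a b hab
  have h := congrArg (CliffordAlgebra.equivExterior Q) hab
  simp only [CliffordAlgebra.equivExterior, CliffordAlgebra.changeFormEquiv,
    LinearEquiv.coe_mk, LinearMap.coe_mk, AddHom.coe_mk, CliffordAlgebra.changeForm_ι] at h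
  exact (ExteriorAlgebra.ι_inj F a b).mp h

lemma my_anticomm {F V : Type*} [Field F] [AddCommGroup V] [Module F V]
    (Q : QuadraticForm F V) (V' : Submodule F V)
    (v : V) (hv : ∀ u ∈ V', QuadraticMap.polar Q v u = 0)
    (a : CliffordAlgebra Q)
    (ha : a ∈ Algebra.adjoin F (CliffordAlgebra.ι Q '' (V' : Set V))) :
    a * CliffordAlgebra.ι Q v = CliffordAlgebra.ι Q v * CliffordAlgebra.involute a := by
  induction ha using Algebra.adjoin_induction with
  | mem b hb =>
    obtain ⟨u, hu, rfl⟩ := hb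
    have h1 := CliffordAlgebra.ι_mul_ι_add_swap (Q := Q) u v
    rw [QuadraticMap.polar_comm, hv u hu, map_zero] at h1
    rw [CliffordAlgebra.involute_ι, mul_neg]
    exact eq_neg_of_add_eq_zero_left h1
  | algebraMap r => rw [AlgHom.commutes, Algebra.commutes]
  | add b c hb hc ihb ihc => rw [add_mul, ihb, ihc, map_add, mul_add]
  | mul b c hb hc ihb ihc => rw [mul_assoc, ihc, ← mul_assoc, ihb, mul_assoc, map_mul]


lemma my_decomp {F V : Type*} [Field F] [AddCommGroup V] [Module F V]
    (Q : QuadraticForm F V) (V' : Submodule F V) [FiniteDimensional F V']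
    (hV'nd : ∀ u ∈ V', (∀ w ∈ V', QuadraticMap.polar Q u w = 0) → u = 0)
    (v : V) : ∃ u ∈ V', ∀ w ∈ V', QuadraticMap.polar Q (v - u) w = 0 := by
  let B := QuadraticMap.polarBilin Q
  let f : V →ₗ[F] Module.Dual F V' := V'.subtype.dualMap ∘ₗ B
  let g : (V' : Submodule F V) →ₗ[F] Module.Dual F V' := f ∘ₗ V'.subtype
  have hg : Function.Injective g := by
    rw [← LinearMap.ker_eq_bot, LinearMap.ker_eq_bot']
    intro u hu
    have hu0 : (u : V) = 0 := hV'nd u u.2 (fun w hw => by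
      simpa [g, f, B] using DFunLike.congr_fun hu ⟨w, hw⟩)
    exact Subtype.ext hu0
  have hsurj : Function.Surjective g :=
    (LinearMap.injective_iff_surjective_of_finrank_eq_finrank
      (Subspace.dual_finrank_eq).symm).mp hg
  obtain ⟨u, hu⟩ := hsurj (f v)
  refine ⟨u, u.2, fun w hw => ?_⟩
  have h1 : QuadraticMap.polar Q (u : V) w = QuadraticMap.polar Q v w := by
    simpa [g, f, B] using DFunLike.congr_fun hu ⟨w, hw⟩
  rw [QuadraticMap.polar_sub_left, h1, sub_self]


open CliffordAlgebra in
theorem perp_eigen_aux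
    {F V : Type*} [Field F] [AddCommGroup V] [Module F V]
    (hchar : (2 : F) ≠ 0) (hV : ¬ FiniteDimensional F V)
    (Q : QuadraticForm F V)
    (hQ : ∀ v : V, (∀ w : V, QuadraticMap.polar Q v w = 0) → v = 0)
    (φ : V →ₗ[F] V) (hφbij : Function.Bijective φ)
    (hφQ : ∀ v : V, Q (φ v) = Q v)
    (θ : CliffordAlgebra Q ≃ₐ[F] CliffordAlgebra Q)
    (hθ : ∀ v : V, θ (CliffordAlgebra.ι Q v) = CliffordAlgebra.ι Q (φ v))
    (V' : Submodule F V) (hV'fd : FiniteDimensional F V')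
    (hV'even : Even (Module.finrank F V'))
    (hV'nd : ∀ u ∈ V', (∀ w ∈ V', QuadraticMap.polar Q u w = 0) → u = 0)
    (x : (CliffordAlgebra Q)ˣ)
    (hx : (x : CliffordAlgebra Q) ∈
      Algebra.adjoin F (CliffordAlgebra.ι Q '' (V' : Set V)))
    (hinner : ∀ a : CliffordAlgebra Q, θ a = x * a * ↑x⁻¹) :
    ∃ ε : F, (ε = 1 ∨ ε = -1) ∧
      ∀ v : V, (∀ u ∈ V', QuadraticMap.polar Q v u = 0) → φ v = ε • v := by
  classical
  haveI : Invertible (2:F) := invertibleOfNonzero hchar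
  have ιinj := my_iota_inj hchar Q
  have algInj : Function.Injective (algebraMap F (CliffordAlgebra Q)) :=
    (algebraMap F (CliffordAlgebra Q)).injective
  set t : CliffordAlgebra Q :=
    CliffordAlgebra.involute (↑x : CliffordAlgebra Q) * ↑x⁻¹ with htdef
  -- conjugation identity
  have h2 : ∀ v : V, ι Q (φ v) * (↑x : CliffordAlgebra Q) = ↑x * ι Q v := by
    intro v
    have h := hinner (ι Q v)
    rw [hθ] at h
    rw [h, mul_assoc, Units.inv_mul, mul_one]
  -- main relation
  have h3 : ∀ v : V, (∀ u ∈ V', QuadraticMap.polar Q v u = 0) →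
      ι Q v * ι Q (φ v) = Q v • t := by
    intro v hv
    have e1 : ι Q (φ v) * (↑x : CliffordAlgebra Q)
        = ι Q v * CliffordAlgebra.involute (↑x : CliffordAlgebra Q) := by
      rw [h2 v, my_anticomm Q V' v hv ↑x hx]
    have e2 : ι Q (φ v)
        = ι Q v * CliffordAlgebra.involute (↑x : CliffordAlgebra Q) * (↑x⁻¹ : CliffordAlgebra Q) := by
      rw [← e1, mul_assoc, Units.mul_inv, mul_one]
    calc ι Q v * ι Q (φ v)
        = (ι Q v * ι Q v) *
            (CliffordAlgebra.involute (↑x : CliffordAlgebra Q) * (↑x⁻¹ : CliffordAlgebra Q)) := by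
          rw [e2]; simp only [mul_assoc]
      _ = Q v • t := by
          rw [CliffordAlgebra.ι_sq_scalar, ← htdef, ← Algebra.smul_def]
  -- nondegeneracy of the restriction to the perp
  have hWnd : ∀ v : V, (∀ u ∈ V', QuadraticMap.polar Q v u = 0) →
      (∀ w : V, (∀ u ∈ V', QuadraticMap.polar Q w u = 0) → QuadraticMap.polar Q v w = 0) →
      v = 0 := by
    intro v hv hv2
    apply hQ v
    intro w
    obtain ⟨u, hu, hw⟩ := my_decomp Q V' hV'nd w
    have h5 := hv2 (w - u) hw
    rw [QuadraticMap.polar_sub_right, hv u hu, sub_zero] at h5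
    exact h5
  -- existence of an anisotropic vector in the perp
  have hex : ∃ v : V, (∀ u ∈ V', QuadraticMap.polar Q v u = 0) ∧ Q v ≠ 0 := by
    by_contra hcon
    push_neg at hcon
    have hallz : ∀ v : V, (∀ u ∈ V', QuadraticMap.polar Q v u = 0) → v = 0 := by
      intro v hv
      apply hWnd v hv
      intro w hw
      have hvw : ∀ u ∈ V', QuadraticMap.polar Q (v + w) u = 0 := fun u hu => by
        rw [QuadraticMap.polar_add_left, hv u hu, hw u hu, add_zero]
      have hd : QuadraticMap.polar Q v w = Q (v + w) - Q v - Q w := rfl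
      rw [hd, hcon _ hv, hcon _ hw, hcon _ hvw, sub_zero, sub_zero]
    have hTop : V' = ⊤ := by
      rw [eq_top_iff]
      intro v _
      obtain ⟨u, hu, hw⟩ := my_decomp Q V' hV'nd v
      have h6 : v - u = 0 := hallz _ hw
      rw [sub_eq_zero] at h6
      rwa [h6]
    apply hV
    rw [hTop] at hV'fd
    exact Submodule.topEquiv.finiteDimensional
  obtain ⟨v₀, hv₀P, hv₀⟩ := hex
  -- properties of t
  have e0 : ι Q v₀ * ι Q (φ v₀) = Q v₀ • t := h3 v₀ hv₀P
  have htexp : t = (Q v₀)⁻¹ • (ι Q v₀ * ι Q (φ v₀)) := by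
    rw [e0, inv_smul_smul₀ hv₀]
  have htinv : CliffordAlgebra.involute t = t := by
    rw [htexp, map_smul, map_mul, CliffordAlgebra.involute_ι, CliffordAlgebra.involute_ι,
      neg_mul_neg]
  have htt : t * t = 1 := by
    nth_rewrite 2 [← htinv]
    rw [htdef, map_mul, CliffordAlgebra.involute_involute, mul_assoc,
      ← mul_assoc (↑x⁻¹ : CliffordAlgebra Q), Units.inv_mul, one_mul, ← map_mul,
      Units.mul_inv, map_one]
  -- quadratic relation
  have hbb : ι Q (φ v₀) * ι Q (φ v₀) = Q v₀ • (1 : CliffordAlgebra Q) := by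
    rw [CliffordAlgebra.ι_sq_scalar, hφQ v₀, Algebra.algebraMap_eq_smul_one]
  have haa : ι Q v₀ * ι Q v₀ = Q v₀ • (1 : CliffordAlgebra Q) := by
    rw [CliffordAlgebra.ι_sq_scalar, Algebra.algebraMap_eq_smul_one]
  have hswap : ι Q v₀ * ι Q (φ v₀) + ι Q (φ v₀) * ι Q v₀
      = QuadraticMap.polar Q v₀ (φ v₀) • (1 : CliffordAlgebra Q) := by
    rw [CliffordAlgebra.ι_mul_ι_add_swap, Algebra.algebraMap_eq_smul_one]
  have hba : (ι Q (φ v₀) * ι Q v₀) * (ι Q v₀ * ι Q (φ v₀))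
      = (Q v₀ * Q v₀) • (1 : CliffordAlgebra Q) := by
    calc (ι Q (φ v₀) * ι Q v₀) * (ι Q v₀ * ι Q (φ v₀))
        = ι Q (φ v₀) * (ι Q v₀ * ι Q v₀) * ι Q (φ v₀) := by simp only [mul_assoc]
      _ = (Q v₀ * Q v₀) • (1 : CliffordAlgebra Q) := by
          rw [haa, mul_smul_comm, mul_one, smul_mul_assoc, hbb, smul_smul]
  have hab2 : (ι Q v₀ * ι Q (φ v₀)) * (ι Q v₀ * ι Q (φ v₀))
      = (Q v₀ * Q v₀) • (1 : CliffordAlgebra Q) := by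
    rw [e0, smul_mul_smul_comm, htt]
  have hkey : (QuadraticMap.polar Q v₀ (φ v₀) * Q v₀) • t
      = (2 * (Q v₀ * Q v₀)) • (1 : CliffordAlgebra Q) := by
    calc (QuadraticMap.polar Q v₀ (φ v₀) * Q v₀) • t
        = QuadraticMap.polar Q v₀ (φ v₀) • (Q v₀ • t) := by rw [smul_smul]
      _ = (QuadraticMap.polar Q v₀ (φ v₀) • (1 : CliffordAlgebra Q))
            * (ι Q v₀ * ι Q (φ v₀)) := by
          rw [← e0, smul_mul_assoc, one_mul]
      _ = (ι Q v₀ * ι Q (φ v₀) + ι Q (φ v₀) * ι Q v₀) * (ι Q v₀ * ι Q (φ v₀)) := by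
          rw [hswap]
      _ = (Q v₀ * Q v₀) • (1 : CliffordAlgebra Q)
            + (Q v₀ * Q v₀) • (1 : CliffordAlgebra Q) := by
          rw [add_mul, hab2, hba]
      _ = (2 * (Q v₀ * Q v₀)) • (1 : CliffordAlgebra Q) := by
          rw [← add_smul]; congr 1; ring
  have hp0 : QuadraticMap.polar Q v₀ (φ v₀) ≠ 0 := by
    intro hp
    rw [hp, zero_mul, zero_smul] at hkey
    have h0 : (2 * (Q v₀ * Q v₀)) = 0 := by
      apply algInj
      rw [map_zero, Algebra.algebraMap_eq_smul_one, ← hkey]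
    rcases mul_eq_zero.mp h0 with h | h
    · exact hchar h
    · exact hv₀ (mul_self_eq_zero.mp h)
  have hpq : QuadraticMap.polar Q v₀ (φ v₀) * Q v₀ ≠ 0 := mul_ne_zero hp0 hv₀
  set ε : F := (QuadraticMap.polar Q v₀ (φ v₀) * Q v₀)⁻¹ * (2 * (Q v₀ * Q v₀)) with hεdef
  have htε : t = ε • (1 : CliffordAlgebra Q) := by
    calc t = (QuadraticMap.polar Q v₀ (φ v₀) * Q v₀)⁻¹ •
          ((QuadraticMap.polar Q v₀ (φ v₀) * Q v₀) • t) := by rw [inv_smul_smul₀ hpq]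
      _ = ε • (1 : CliffordAlgebra Q) := by rw [hkey, smul_smul]
  have hmm : (ε • (1 : CliffordAlgebra Q)) * (ε • (1 : CliffordAlgebra Q)) = 1 := by
    rw [← htε]; exact htt
  rw [smul_mul_smul_comm, mul_one] at hmm
  have hε2 : ε * ε = 1 := by
    apply algInj
    rw [map_one, Algebra.algebraMap_eq_smul_one]
    exact hmm
  have hεpm : ε = 1 ∨ ε = -1 := mul_self_eq_one_iff.mp hε2
  -- the anisotropic case
  have h7 : ∀ v : V, (∀ u ∈ V', QuadraticMap.polar Q v u = 0) → Q v ≠ 0 → φ v = ε • v := by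
    intro v hv hqv
    have e := h3 v hv
    rw [htε, smul_smul] at e
    have e4 : Q v • ι Q (φ v) = Q v • (ε • ι Q v) := by
      have h' : ι Q v * (ι Q v * ι Q (φ v))
          = ι Q v * ((Q v * ε) • (1 : CliffordAlgebra Q)) := by rw [e]
      rw [← mul_assoc, CliffordAlgebra.ι_sq_scalar, ← Algebra.smul_def, mul_smul_comm, mul_one]
        at h'
      rw [h', ← smul_smul]
    have e5 := smul_right_injective (CliffordAlgebra Q) hqv e4
    apply ιinj
    rw [map_smul]
    exact e5
  refine ⟨ε, hεpm, ?_⟩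
  intro v hv
  by_cases hqv : Q v = 0
  · by_cases hv0 : v = 0
    · rw [hv0, map_zero, smul_zero]
    · have hnall : ¬ ∀ w : V, (∀ u ∈ V', QuadraticMap.polar Q w u = 0) →
          QuadraticMap.polar Q v w = 0 := fun h => hv0 (hWnd v hv h)
      push_neg at hnall
      obtain ⟨w, hw, hp⟩ := hnall
      by_cases hqw : Q w = 0
      · have hP1 : ∀ u ∈ V', QuadraticMap.polar Q (v + w) u = 0 := fun u hu => by
          rw [QuadraticMap.polar_add_left, hv u hu, hw u hu, add_zero]
        have hP2 : ∀ u ∈ V', QuadraticMap.polar Q (v - w) u = 0 := fun u hu => by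
          rw [QuadraticMap.polar_sub_left, hv u hu, hw u hu, sub_zero]
        have hq1 : Q (v + w) ≠ 0 := by
          have hd : QuadraticMap.polar Q v w = Q (v + w) - Q v - Q w := rfl
          rw [hqv, hqw, sub_zero, sub_zero] at hd
          rwa [← hd]
        have hq2 : Q (v - w) ≠ 0 := by
          have hd : QuadraticMap.polar Q v (-w) = Q (v + -w) - Q v - Q (-w) := rfl
          rw [QuadraticMap.polar_neg_right, QuadraticMap.map_neg, ← sub_eq_add_neg, hqv, hqw,
            sub_zero, sub_zero] at hd
          intro h0
          rw [h0, neg_eq_zero] at hd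
          exact hp hd
        have hA := h7 (v + w) hP1 hq1
        have hB := h7 (v - w) hP2 hq2
        have hsum : φ (v + w) + φ (v - w) = ε • (v + w) + ε • (v - w) := by rw [hA, hB]
        rw [← map_add] at hsum
        have hvv : (v + w) + (v - w) = (2:F) • v := by
          rw [two_smul]; abel
        rw [hvv, map_smul] at hsum
        have hfin : (2:F) • φ v = (2:F) • (ε • v) := by
          rw [hsum]
          module
        exact smul_right_injective V hchar hfin
      · have hwε := h7 w hw hqw
        obtain ⟨c, hc0, hcq⟩ : ∃ c : F, c ≠ 0 ∧ Q (v + c • w) ≠ 0 := by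
          have hgen : ∀ c : F, Q (v + c • w)
              = c * (c * Q w + QuadraticMap.polar Q v w) := by
            intro c
            have hd : QuadraticMap.polar Q v (c • w) = Q (v + c • w) - Q v - Q (c • w) := rfl
            rw [QuadraticMap.polar_smul_right, QuadraticMap.map_smul, hqv, smul_eq_mul,
              smul_eq_mul] at hd
            linear_combination -hd
          by_cases h1 : Q w + QuadraticMap.polar Q v w = 0
          · refine ⟨-1, neg_ne_zero.mpr one_ne_zero, ?_⟩
            rw [hgen]
            have h2 : (-1 : F) * ((-1) * Q w + QuadraticMap.polar Q v w) = 2 * Q w := by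
              linear_combination -h1
            rw [h2]
            exact mul_ne_zero hchar hqw
          · refine ⟨1, one_ne_zero, ?_⟩
            rw [hgen]
            intro h0
            apply h1
            linear_combination h0
        have hPc : ∀ u ∈ V', QuadraticMap.polar Q (v + c • w) u = 0 := fun u hu => by
          rw [QuadraticMap.polar_add_left, QuadraticMap.polar_smul_left, hv u hu, hw u hu,
            smul_zero, add_zero]
        have hcε := h7 (v + c • w) hPc hcq
        have hsplit : φ v = φ (v + c • w) - c • φ w := by
          rw [map_add, map_smul]
          abel
        rw [hsplit, hcε, hwε]
        module
  · exact h7 v hv hqv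

/-- If the Bogolyubov automorphism `[φ]` is conjugation by an invertible element `x`
lying in the subalgebra generated by `ι(V')` for a finite-dimensional nondegenerate
even-dimensional subspace `V' ⊆ V`, then every `v ∈ V'^⊥` satisfies `φ v = v` or
`φ v = -v`; moreover, `V'^⊥ ⊆ V(1)` or `V'^⊥ ⊆ V(-1)`. -/
theorem perp_eigen_of_inner_by_element_of_subalgebra
    {F V : Type*} [Field F] [AddCommGroup V] [Module F V]
    (hchar : (2 : F) ≠ 0) (hV : ¬ FiniteDimensional F V)
    (Q : QuadraticForm F V)
    (hQ : ∀ v : V, (∀ w : V, QuadraticMap.polar Q v w = 0) → v = 0)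
    (φ : V →ₗ[F] V) (hφbij : Function.Bijective φ)
    (hφQ : ∀ v : V, Q (φ v) = Q v)
    (θ : CliffordAlgebra Q ≃ₐ[F] CliffordAlgebra Q)
    (hθ : ∀ v : V, θ (CliffordAlgebra.ι Q v) = CliffordAlgebra.ι Q (φ v))
    (V' : Submodule F V) (hV'fd : FiniteDimensional F V')
    (hV'even : Even (Module.finrank F V'))
    (hV'nd : ∀ u ∈ V', (∀ w ∈ V', QuadraticMap.polar Q u w = 0) → u = 0)
    (x : (CliffordAlgebra Q)ˣ)
    (hx : (x : CliffordAlgebra Q) ∈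
      Algebra.adjoin F (CliffordAlgebra.ι Q '' (V' : Set V)))
    (hinner : ∀ a : CliffordAlgebra Q, θ a = x * a * ↑x⁻¹) :
    (∀ v : V, (∀ u ∈ V', QuadraticMap.polar Q v u = 0) → φ v = v ∨ φ v = -v) ∧
      ((∀ v : V, (∀ u ∈ V', QuadraticMap.polar Q v u = 0) → v ∈ eigSp φ 1) ∨
        (∀ v : V, (∀ u ∈ V', QuadraticMap.polar Q v u = 0) → v ∈ eigSp φ (-1))) := by
  obtain ⟨ε, hεpm, hε⟩ := perp_eigen_aux hchar hV Q hQ φ hφbij hφQ θ hθ V' hV'fd hV'even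
    hV'nd x hx hinner
  constructor
  · intro v hv
    rcases hεpm with h | h
    · left; rw [hε v hv, h, one_smul]
    · right; rw [hε v hv, h, neg_one_smul]
  · rcases hεpm with h | h
    · left
      intro v hv
      simp only [eigSp, LinearMap.mem_ker, LinearMap.sub_apply, LinearMap.smul_apply,
        LinearMap.id_coe, id_eq, sub_eq_zero]
      rw [hε v hv, h, one_smul]
    · right
      intro v hv
      simp only [eigSp, LinearMap.mem_ker, LinearMap.sub_apply, LinearMap.smul_apply,
        LinearMap.id_coe, id_eq, sub_eq_zero]
      rw [hε v hv, h, neg_one_smul]
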